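/- Suppose at least ⌈(n−1)/3⌉ good citizens hold all ρ transaction pools, and each independently uploads 10 uniformly random pools it holds to 1 uniformly random politician (of which a fraction γ are corrupt). Then the probability that some pool among the ρ pools is not uploaded to any honest politician by any of these citizens is at most ρ·((ρ−10)/ρ + 10γ/ρ)^{⌈(n−1)/3⌉}. For ρ = 45, γ = 0.8, and n ≥ 1700, this probability is less than 2^{−30}. -/

import Mathlib

open MeasureTheory ProbabilityTheory
open scoped ENNReal

/-- Second re-upload step.  At least `⌈(n-1)/3⌉` good citizens hold all `ρ` pools, and
each uploads 10 uniformly random pools it holds to one uniformly random politician, a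
fraction `γ` of which are corrupt; so citizen `j`'s upload delivers pool `i` to an
honest politician (`W i j ω = true`) with probability at least `(10/ρ)(1-γ)`,
independently across citizens.  Then the probability that some pool among the `ρ`
pools is not uploaded to any honest politician is at most
`ρ·((ρ-10)/ρ + 10γ/ρ)^{⌈(n-1)/3⌉}`, and for `ρ = 45`, `γ = 0.8`, `n ≥ 1700` this
bound is less than `2^{-30}`. -/
theorem second_reupload_bound
    {Ω : Type*} [MeasurableSpace Ω] (μ : Measure Ω) [IsProbabilityMeasure μ]
    (ρ n : ℕ) (hρ : 10 ≤ ρ) (γ : ℝ) (hγ0 : 0 ≤ γ) (hγ1 : γ < 1)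
    (W : Fin ρ → Fin (⌈((n : ℝ) - 1) / 3⌉₊) → Ω → Bool)
    (hmeas : ∀ i j, Measurable (W i j))
    (hindep : ∀ i, iIndepFun (W i) μ)
    (hupload : ∀ i j,
      ENNReal.ofReal ((10 / (ρ : ℝ)) * (1 - γ)) ≤ μ {ω | W i j ω = true}) :
    (μ {ω | ∃ i, ∀ j, W i j ω = false}).toReal
        ≤ (ρ : ℝ) * ((((ρ : ℝ) - 10) / ρ + 10 * γ / ρ) ^ (⌈((n : ℝ) - 1) / 3⌉₊)) ∧
    (ρ = 45 → γ = 0.8 → 1700 ≤ n →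
      (ρ : ℝ) * ((((ρ : ℝ) - 10) / ρ + 10 * γ / ρ) ^ (⌈((n : ℝ) - 1) / 3⌉₊))
        < (2 : ℝ) ^ (-(30 : ℤ))) := by
  have hρR : (10 : ℝ) ≤ (ρ : ℝ) := by exact_mod_cast hρ
  have hρ0 : (0 : ℝ) < (ρ : ℝ) := by linarith
  set q : ℝ := (10 / (ρ : ℝ)) * (1 - γ) with hq
  set p : ℝ := ((ρ : ℝ) - 10) / ρ + 10 * γ / ρ with hp
  have hq0 : 0 ≤ q := mul_nonneg (by positivity) (by linarith)
  have hq1 : q ≤ 1 := by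
    have h1 : (10 : ℝ) / ρ ≤ 1 := by rw [div_le_one hρ0]; exact hρR
    calc q ≤ 1 * 1 := mul_le_mul h1 (by linarith) (by linarith) (by norm_num)
    _ = 1 := by ring
  have hpq : p = 1 - q := by rw [hp, hq, sub_div, div_self hρ0.ne']; ring
  have hp0 : 0 ≤ p := by rw [hpq]; linarith
  have hp1 : p ≤ 1 := by rw [hpq]; linarith
  have key : ∀ i, μ {ω | ∀ j, W i j ω = false}
      ≤ ENNReal.ofReal (p ^ (⌈((n : ℝ) - 1) / 3⌉₊)) := by
    intro i
    have hset : {ω | ∀ j, W i j ω = false} = ⋂ j, (W i j) ⁻¹' {false} := by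
      ext ω; simp
    rw [hset, (hindep i).meas_iInter (fun j => ⟨{false}, trivial, rfl⟩)]
    have hone : ∀ j, μ ((W i j) ⁻¹' {false}) ≤ ENNReal.ofReal p := by
      intro j
      have hc : (W i j) ⁻¹' {false} = ((W i j) ⁻¹' {true})ᶜ := by
        ext ω; simp
      rw [hc, measure_compl ((hmeas i j) (trivial : MeasurableSet {true}))
          (measure_ne_top μ _), measure_univ]
      have hdef : (W i j) ⁻¹' {true} = {ω | W i j ω = true} := rfl
      rw [hdef]
      rw [hpq, ENNReal.ofReal_sub _ hq0, ENNReal.ofReal_one]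
      exact tsub_le_tsub le_rfl (hupload i j)
    calc ∏ j, μ ((W i j) ⁻¹' {false})
        ≤ ∏ _j : Fin (⌈((n : ℝ) - 1) / 3⌉₊), ENNReal.ofReal p :=
          Finset.prod_le_prod' (fun j _ => hone j)
      _ = ENNReal.ofReal p ^ (⌈((n : ℝ) - 1) / 3⌉₊) := by simp
      _ = ENNReal.ofReal (p ^ (⌈((n : ℝ) - 1) / 3⌉₊)) :=
          (ENNReal.ofReal_pow hp0 _).symm
  have hunion : μ {ω | ∃ i, ∀ j, W i j ω = false}
      ≤ (ρ : ℝ≥0∞) * ENNReal.ofReal (p ^ (⌈((n : ℝ) - 1) / 3⌉₊)) := by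
    have hset : {ω | ∃ i, ∀ j, W i j ω = false}
        = ⋃ i, {ω | ∀ j, W i j ω = false} := by ext ω; simp
    rw [hset]
    calc μ (⋃ i, {ω | ∀ j, W i j ω = false})
        ≤ ∑ i, μ {ω | ∀ j, W i j ω = false} := measure_iUnion_fintype_le μ _
      _ ≤ ∑ _i : Fin ρ, ENNReal.ofReal (p ^ (⌈((n : ℝ) - 1) / 3⌉₊)) :=
          Finset.sum_le_sum (fun i _ => key i)
      _ = (ρ : ℝ≥0∞) * ENNReal.ofReal (p ^ (⌈((n : ℝ) - 1) / 3⌉₊)) := by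
          simp [mul_comm]
  constructor
  · have h1 : (μ {ω | ∃ i, ∀ j, W i j ω = false}).toReal
        ≤ ((ρ : ℝ≥0∞) * ENNReal.ofReal (p ^ (⌈((n : ℝ) - 1) / 3⌉₊))).toReal := by
      apply ENNReal.toReal_mono _ hunion
      exact ENNReal.mul_ne_top (by simp) ENNReal.ofReal_ne_top
    refine h1.trans_eq ?_
    rw [ENNReal.toReal_mul, ENNReal.toReal_ofReal (by positivity)]
    simp
  · rintro rfl rfl hn
    have hm567 : 567 ≤ ⌈((n : ℝ) - 1) / 3⌉₊ := by
      have h1 : (1700 : ℝ) ≤ (n : ℝ) := by exact_mod_cast hn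
      have h2 : ((566 : ℕ) : ℝ) < ((n : ℝ) - 1) / 3 := by push_cast; linarith
      have := Nat.lt_ceil.mpr h2
      omega
    have hpval : p = 43 / 45 := by norm_num [hp]
    have hmono : p ^ (⌈((n : ℝ) - 1) / 3⌉₊) ≤ p ^ 567 :=
      pow_le_pow_of_le_one hp0 hp1 hm567
    have hfin : (45 : ℝ) * ((43 / 45 : ℝ)) ^ 567 < (2 : ℝ) ^ (-(30 : ℤ)) := by
      have h81 : (43 / 45 : ℝ) ^ 81 < 1 / 39 := by norm_num
      have h7 : (43 / 45 : ℝ) ^ 567 < (1 / 39) ^ 7 := by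
        rw [show 567 = 81 * 7 from rfl, pow_mul]
        exact pow_lt_pow_left₀ h81 (by positivity) (by norm_num)
      have h39 : (45 : ℝ) * (1 / 39) ^ 7 < (2 : ℝ) ^ (-(30 : ℤ)) := by norm_num
      exact lt_trans (mul_lt_mul_of_pos_left h7 (by norm_num)) h39
    push_cast
    calc (45 : ℝ) * p ^ (⌈((n : ℝ) - 1) / 3⌉₊) ≤ 45 * p ^ 567 := by
          exact mul_le_mul_of_nonneg_left hmono (by norm_num)
      _ < (2 : ℝ) ^ (-(30 : ℤ)) := by rw [hpval]; exact hfin
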